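/- Let H be a real symmetric positive definite n×n matrix and B a real skew-symmetric n×n matrix with H + iB Hermitian positive definite. Then det(H + iB) = det(H) · ∏_{j}(1 − λ_j²) where ±λ_j are the (real, paired) eigenvalues of the Hermitian matrix i H^{-1/2} B H^{-1/2}; consequently 0 < det(H + iB) ≤ det(H), with equality if and only if B = 0. -/

import Mathlib

open Matrix ComplexOrder


/-- From a permutation of lists of two tuples, get a permutation of indices. -/
lemma exists_perm_of_perm {n : ℕ} {f g : Fin n → ℝ}
    (h : (List.ofFn f).Perm (List.ofFn g)) :
    ∃ σ : Equiv.Perm (Fin n), ∀ j, f (σ j) = g j := by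
  have h1 : f ∘ Tuple.sort f = g ∘ Tuple.sort g := by
    apply List.ofFn_injective
    refine List.Perm.eq_of_sortedLE (Tuple.monotone_sort f).sortedLE_ofFn
      (Tuple.monotone_sort g).sortedLE_ofFn ?_
    exact ((Tuple.sort f).ofFn_comp_perm f).trans (h.trans ((Tuple.sort g).ofFn_comp_perm g).symm)
  refine ⟨(Tuple.sort g).symm.trans (Tuple.sort f), fun j => ?_⟩
  have := congrFun h1 ((Tuple.sort g).symm j)
  simpa using this

lemma prod_eq_one_forall {n : ℕ} {f : Fin n → ℝ} (h0 : ∀ j, 0 ≤ f j) (h1 : ∀ j, f j ≤ 1)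
    (hp : ∏ j, f j = 1) (j : Fin n) : f j = 1 := by
  refine le_antisymm (h1 j) ?_
  have herase : f j * ∏ i ∈ Finset.univ.erase j, f i = 1 := by
    rw [Finset.mul_prod_erase _ _ (Finset.mem_univ j)]; exact hp
  have hP1 : ∏ i ∈ Finset.univ.erase j, f i ≤ 1 :=
    Finset.prod_le_one (fun i _ => h0 i) (fun i _ => h1 i)
  have hP0 : 0 ≤ ∏ i ∈ Finset.univ.erase j, f i := Finset.prod_nonneg fun i _ => h0 i
  calc (1:ℝ) = f j * ∏ i ∈ Finset.univ.erase j, f i := herase.symm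
    _ ≤ f j * 1 := by
        apply mul_le_mul_of_nonneg_left hP1 (h0 j)
    _ = f j := mul_one _

section Main
variable {n : ℕ} (H B R : Matrix (Fin n) (Fin n) ℝ)

noncomputable def cmap (X : Matrix (Fin n) (Fin n) ℝ) : Matrix (Fin n) (Fin n) ℂ :=
  X.map (fun x => (x : ℂ))

lemma cmap_mul (X Y : Matrix (Fin n) (Fin n) ℝ) : cmap (X * Y) = cmap X * cmap Y := by
  exact Matrix.map_mul (f := Complex.ofRealHom)

lemma cmap_one : cmap (1 : Matrix (Fin n) (Fin n) ℝ) = 1 := by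
  simp only [cmap]; exact Matrix.map_one (fun x : ℝ => (x : ℂ)) rfl rfl

lemma cmap_conjTranspose (X : Matrix (Fin n) (Fin n) ℝ) : (cmap X)ᴴ = cmap Xᵀ := by
  ext i j; simp [cmap, conjTranspose_apply]

end Main

lemma det_aux {n : ℕ} {M : Matrix (Fin n) (Fin n) ℂ} (hM : M.IsHermitian) (x c : ℝ) :
    ((x:ℂ) • 1 + (c:ℂ) • M).det = ((∏ j, (x + c * hM.eigenvalues j) : ℝ) : ℂ) := by
  set U : Matrix (Fin n) (Fin n) ℂ := (hM.eigenvectorUnitary : Matrix (Fin n) (Fin n) ℂ) with hUdef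
  have hU : U * star U = 1 := Matrix.mem_unitaryGroup_iff.mp hM.eigenvectorUnitary.2
  have hdiag : (x:ℂ) • (1 : Matrix (Fin n) (Fin n) ℂ)
      + (c:ℂ) • diagonal (RCLike.ofReal ∘ hM.eigenvalues) =
      diagonal (fun j => ((x + c * hM.eigenvalues j : ℝ) : ℂ)) := by
    ext i j
    by_cases h : i = j
    · subst h; simp [Matrix.one_apply]
    · simp [Matrix.one_apply, h, Matrix.diagonal_apply_ne _ h]
  have key : (x:ℂ) • (1 : Matrix (Fin n) (Fin n) ℂ) + (c:ℂ) • M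
      = U * ((x:ℂ) • 1 + (c:ℂ) • diagonal (RCLike.ofReal ∘ hM.eigenvalues)) * star U := by
    conv_lhs => rw [hM.spectral_theorem, Unitary.conjStarAlgAut_apply]
    simp only [Matrix.mul_add, Matrix.add_mul, Matrix.mul_smul, Matrix.smul_mul,
      Matrix.mul_one, Matrix.mul_assoc, hU, Unitary.coe_star]
    rfl
  rw [key, Matrix.det_mul_right_comm, hU, one_mul, hdiag, det_diagonal]
  push_cast
  rfl

lemma pairing_aux {n : ℕ} {M : Matrix (Fin n) (Fin n) ℂ} (hM : M.IsHermitian)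
    (hconj : ∀ i j, (starRingEnd ℂ) (M i j) = - M i j) :
    ∃ σ : Equiv.Perm (Fin n), ∀ j, hM.eigenvalues (σ j) = -hM.eigenvalues j := by
  have hx : ∀ x : ℝ, (∏ j, (x + hM.eigenvalues j)) = ∏ j, (x + (-1) * hM.eigenvalues j) := by
    intro x
    have h1 := det_aux hM x 1
    have h2 := det_aux hM x (-1)
    have hc : ((x:ℂ) • (1:Matrix (Fin n) (Fin n) ℂ) + ((-1:ℝ):ℂ) • M)
        = ((x:ℂ) • 1 + ((1:ℝ):ℂ) • M).map (starRingEnd ℂ) := by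
      ext i j
      by_cases h : i = j <;>
        simp [Matrix.map_apply, Matrix.one_apply, h, hconj, map_add, _root_.map_mul]
    rw [hc] at h2
    have h2' : (starRingEnd ℂ) ((x:ℂ) • 1 + ((1:ℝ):ℂ) • M).det
        = ((∏ j, (x + (-1) * hM.eigenvalues j) : ℝ) : ℂ) := by
      rw [RingHom.map_det]; exact h2
    rw [h1, Complex.conj_ofReal] at h2'
    have h3 := Complex.ofReal_injective h2'
    simpa using h3
  have hpq : (∏ j, (Polynomial.X - Polynomial.C (-(hM.eigenvalues j))))
      = ∏ j, (Polynomial.X - Polynomial.C (hM.eigenvalues j)) := by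
    apply Polynomial.funext; intro x
    simp only [Polynomial.eval_prod, Polynomial.eval_sub, Polynomial.eval_X, Polynomial.eval_C,
      sub_neg_eq_add]
    have := hx x
    simp only [neg_one_mul, ← sub_eq_add_neg] at this
    exact this
  have hform : ∀ f : Fin n → ℝ, (∏ j, (Polynomial.X - Polynomial.C (f j)))
      = ((Finset.univ.val.map f).map (fun a => Polynomial.X - Polynomial.C a)).prod := by
    intro f; rw [Multiset.map_map]; rfl
  have hms : (Finset.univ.val.map (fun j => -(hM.eigenvalues j)))
      = Finset.univ.val.map hM.eigenvalues := by
    have := congrArg Polynomial.roots hpq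
    rwa [hform, hform, Polynomial.roots_multiset_prod_X_sub_C,
      Polynomial.roots_multiset_prod_X_sub_C] at this
  rw [Fin.univ_val_map, Fin.univ_val_map, Multiset.coe_eq_coe] at hms
  obtain ⟨σ, hσ⟩ := exists_perm_of_perm hms
  exact ⟨σ, fun j => by have := hσ j; linarith [hσ j]⟩



/-- For `H` real symmetric positive definite (with positive definite square root `R`,
`R * R = H`) and `B` real skew-symmetric with `H + iB` positive definite: the eigenvalues
of the Hermitian matrix `i R⁻¹ B R⁻¹` come in pairs `±λ`, and
`det(H + iB) = det H ⋅ ∏_j √(1 - λ_j²)` (the paired product form of `∏ (1 - λ_j²)`);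
consequently `0 < det(H + iB) ≤ det H`, with equality iff `B = 0`. -/
theorem stmt_19 {n : ℕ} (H B R : Matrix (Fin n) (Fin n) ℝ)
    (hH : H.IsSymm) (hHpd : H.PosDef) (hB : Bᵀ = -B)
    (hR : R.PosDef) (hRs : R.IsSymm) (hRsq : R * R = H)
    (hM : (Complex.I • ((R⁻¹ * B * R⁻¹).map (fun x => (x : ℂ)))).IsHermitian)
    (hpd : (H.map (fun x => (x : ℂ)) + Complex.I • B.map (fun x => (x : ℂ))).PosDef) :
    (∃ τ : Fin n ≃ Fin n, ∀ j, hM.eigenvalues (τ j) = -hM.eigenvalues j) ∧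
    ((H.map (fun x => (x : ℂ)) + Complex.I • B.map (fun x => (x : ℂ))).det).re =
      H.det * ∏ j, Real.sqrt (1 - hM.eigenvalues j ^ 2) ∧
    0 < ((H.map (fun x => (x : ℂ)) + Complex.I • B.map (fun x => (x : ℂ))).det).re ∧
    ((H.map (fun x => (x : ℂ)) + Complex.I • B.map (fun x => (x : ℂ))).det).re ≤ H.det ∧
    (((H.map (fun x => (x : ℂ)) + Complex.I • B.map (fun x => (x : ℂ))).det).re = H.det ↔
      B = 0) := by
  classical
  have hdetR : IsUnit R.det := isUnit_iff_ne_zero.mpr hR.det_pos.ne'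
  have hRR' : R * R⁻¹ = 1 := mul_nonsing_inv R hdetR
  have hR'R : R⁻¹ * R = 1 := nonsing_inv_mul R hdetR
  have hRCR : R * (R⁻¹ * B * R⁻¹) * R = B := by
    rw [mul_assoc R⁻¹ B R⁻¹, Matrix.mul_nonsing_inv_cancel_left _ _ hdetR,
      Matrix.nonsing_inv_mul_cancel_right _ _ hdetR]
  set M := Complex.I • ((R⁻¹ * B * R⁻¹).map (fun x => (x : ℂ))) with hMdef
  set lam := hM.eigenvalues with hlam
  have h2 : cmap R * cmap R⁻¹ = 1 := by rw [← cmap_mul, hRR', cmap_one]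
  have h1 : cmap R⁻¹ * cmap R = 1 := by rw [← cmap_mul, hR'R, cmap_one]
  have expand : cmap R * (1 + M) * cmap R = cmap H + Complex.I • cmap B := by
    rw [hMdef, Matrix.mul_add, Matrix.add_mul, mul_one, Matrix.mul_smul, Matrix.smul_mul,
      show (R⁻¹ * B * R⁻¹).map (fun x => (x : ℂ)) = cmap (R⁻¹ * B * R⁻¹) from rfl,
      ← cmap_mul, ← cmap_mul, ← cmap_mul, hRsq, hRCR]
  have hfact : H.map (fun x => (x : ℂ)) + Complex.I • B.map (fun x => (x : ℂ))
      = cmap R * (1 + M) * cmap R := expand.symm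
  -- determinant
  have hdet1M : (1 + M).det = ((∏ j, (1 + lam j) : ℝ) : ℂ) := by
    have := det_aux hM 1 1
    simpa using this
  have hdetRc : (cmap R).det = ((R.det : ℝ) : ℂ) := (RingHom.map_det Complex.ofRealHom R).symm
  have hHdet : H.det = R.det * R.det := by rw [← hRsq, det_mul]
  have hdetA : (H.map (fun x => (x : ℂ)) + Complex.I • B.map (fun x => (x : ℂ))).det
      = ((H.det * ∏ j, (1 + lam j) : ℝ) : ℂ) := by
    rw [hfact, det_mul, det_mul, hdet1M, hdetRc, hHdet]
    push_cast
    ring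
  have hre : (((H.map (fun x => (x : ℂ)) + Complex.I • B.map (fun x => (x : ℂ))).det)).re
      = H.det * ∏ j, (1 + lam j) := by rw [hdetA, Complex.ofReal_re]
  -- pairing
  have hcj : ∀ i j, (starRingEnd ℂ) (M i j) = -M i j := by
    intro i j
    simp only [hMdef, Matrix.smul_apply, Matrix.map_apply, smul_eq_mul, _root_.map_mul,
      Complex.conj_I, Complex.conj_ofReal]
    ring
  obtain ⟨τ, hτ⟩ := pairing_aux hM hcj
  simp only [← hlam] at hτ
  -- positivity of 1 + lam j
  have hNH : (1 + M).IsHermitian := Matrix.isHermitian_one.add hM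
  have hRc'H : (cmap R⁻¹)ᴴ = cmap R⁻¹ := by
    rw [cmap_conjTranspose, Matrix.transpose_nonsing_inv, hRs.eq]
  have hcancel : ∀ X : Matrix (Fin n) (Fin n) ℂ,
      cmap R⁻¹ * (cmap R * X * cmap R) * cmap R⁻¹ = X := by
    intro X
    calc cmap R⁻¹ * (cmap R * X * cmap R) * cmap R⁻¹
        = (cmap R⁻¹ * cmap R) * X * (cmap R * cmap R⁻¹) := by
          simp only [Matrix.mul_assoc]
      _ = X := by rw [h1, h2, one_mul, mul_one]
  have hN : 1 + M = (cmap R⁻¹)ᴴ * (H.map (fun x => (x : ℂ))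
      + Complex.I • B.map (fun x => (x : ℂ))) * cmap R⁻¹ := by
    rw [hRc'H, hfact, hcancel]
  have hNpd : (1 + M).PosDef := by
    refine Matrix.PosDef.of_dotProduct_mulVec_pos hNH fun x hx => ?_
    have hx' : cmap R⁻¹ *ᵥ x ≠ 0 := by
      intro h0
      apply hx
      have hxx : cmap R *ᵥ (cmap R⁻¹ *ᵥ x) = x := by
        rw [mulVec_mulVec, h2, one_mulVec]
      rw [h0, Matrix.mulVec_zero] at hxx
      exact hxx.symm
    have hq := hpd.dotProduct_mulVec_pos hx'
    rw [hN]
    simpa only [star_mulVec, dotProduct_mulVec, vecMul_vecMul] using hq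
  have hpos : ∀ j, 0 < 1 + lam j := by
    intro j
    have hv := hM.mulVec_eigenvectorBasis j
    have hv0 : ⇑(hM.eigenvectorBasis j) ≠ 0 := by simpa using hM.eigenvectorBasis.orthonormal.ne_zero j
    have hq := hNpd.re_dotProduct_pos hv0
    have hdv : star ⇑(hM.eigenvectorBasis j) ⬝ᵥ ⇑(hM.eigenvectorBasis j) = 1 := by
      have h1' := (orthonormal_iff_ite.mp hM.eigenvectorBasis.orthonormal) j j
      simp only [if_pos rfl] at h1'
      rw [EuclideanSpace.inner_eq_star_dotProduct] at h1'
      rw [dotProduct_comm]; simpa using h1'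
    have hcalc : star ⇑(hM.eigenvectorBasis j) ⬝ᵥ ((1 + M) *ᵥ ⇑(hM.eigenvectorBasis j))
        = 1 + (lam j : ℂ) := by
      rw [Matrix.add_mulVec, Matrix.one_mulVec, hv, dotProduct_add, dotProduct_smul, hdv]
      simp [Complex.real_smul]
      rfl
    rw [hcalc] at hq
    simpa using hq
  have hlt : ∀ j, 0 < 1 - lam j := by
    intro j
    have := hpos (τ j)
    rw [hτ j] at this
    linarith
  have h1m : ∀ j, 0 < 1 - lam j ^ 2 := by
    intro j
    nlinarith [mul_pos (hpos j) (hlt j)]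
  -- sqrt product
  have hsqrt : ∏ j, Real.sqrt (1 - lam j ^ 2) = ∏ j, (1 + lam j) := by
    have hs1 : ∀ j, Real.sqrt (1 - lam j ^ 2)
        = Real.sqrt (1 - lam j) * Real.sqrt (1 + lam j) := by
      intro j
      rw [← Real.sqrt_mul (hlt j).le]
      congr 1
      ring
    rw [Finset.prod_congr rfl (fun j _ => hs1 j), Finset.prod_mul_distrib]
    have hs2 : ∏ j, Real.sqrt (1 - lam j) = ∏ j, Real.sqrt (1 + lam j) := by
      rw [← Equiv.prod_comp τ (fun j => Real.sqrt (1 + lam j))]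
      apply Finset.prod_congr rfl
      intro j _
      rw [hτ j, ← sub_eq_add_neg]
    rw [hs2, ← Finset.prod_mul_distrib]
    apply Finset.prod_congr rfl
    intro j _
    exact Real.mul_self_sqrt (hpos j).le
  have hmain : (((H.map (fun x => (x : ℂ)) + Complex.I • B.map (fun x => (x : ℂ))).det)).re
      = H.det * ∏ j, Real.sqrt (1 - lam j ^ 2) := by rw [hre, hsqrt]
  have hprodpos : 0 < ∏ j, Real.sqrt (1 - lam j ^ 2) :=
    Finset.prod_pos fun j _ => Real.sqrt_pos.mpr (h1m j)
  have hprodle : ∏ j, Real.sqrt (1 - lam j ^ 2) ≤ 1 :=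
    Finset.prod_le_one (fun j _ => Real.sqrt_nonneg _)
      (fun j _ => Real.sqrt_le_one.mpr (by nlinarith [sq_nonneg (lam j)]))
  refine ⟨⟨τ, hτ⟩, hmain, ?_, ?_, ?_⟩
  · rw [hmain]; exact mul_pos hHpd.det_pos hprodpos
  · rw [hmain]
    calc H.det * ∏ j, Real.sqrt (1 - lam j ^ 2) ≤ H.det * 1 :=
      mul_le_mul_of_nonneg_left hprodle hHpd.det_pos.le
      _ = H.det := mul_one _
  · constructor
    · intro heq
      rw [hmain] at heq
      have hp1 : ∏ j, Real.sqrt (1 - lam j ^ 2) = 1 := by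
        have h' : H.det * ∏ j, Real.sqrt (1 - lam j ^ 2) = H.det * 1 := by
          rw [mul_one]; exact heq
        exact mul_left_cancel₀ hHpd.det_pos.ne' h'
      have hall : ∀ j, lam j = 0 := by
        intro j
        have := prod_eq_one_forall (fun j => Real.sqrt_nonneg _)
          (fun j => Real.sqrt_le_one.mpr (by nlinarith [sq_nonneg (lam j)])) hp1 j
        have h12 : 1 - lam j ^ 2 = 1 := Real.sqrt_eq_one.mp this
        have : lam j ^ 2 = 0 := by linarith
        exact pow_eq_zero_iff (by norm_num) |>.mp this
      have hM0 : M = 0 := by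
        have hspec := hM.spectral_theorem
        have : (fun j => ((lam j : ℝ) : ℂ)) = fun _ => 0 := by
          funext j; rw [hall j]; simp
        rw [hspec]
        have : Matrix.diagonal (RCLike.ofReal ∘ lam) = (0 : Matrix (Fin n) (Fin n) ℂ) := by
          ext i j
          rcases eq_or_ne i j with rfl | hij
          · simp [hall i]
          · simp [Matrix.diagonal_apply_ne _ hij]
        rw [this, map_zero]
      have hC0 : R⁻¹ * B * R⁻¹ = 0 := by
        have hsm : (R⁻¹ * B * R⁻¹).map (fun x => (x : ℂ)) = 0 := by
          have := hMdef.symm.trans hM0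
          rcases smul_eq_zero.mp this with h | h
          · exact absurd h Complex.I_ne_zero
          · exact h
        ext i j
        have := congrFun (congrFun hsm i) j
        simpa [Matrix.map_apply] using this
      have : B = 0 := by rw [← hRCR, hC0, mul_zero, zero_mul]
      exact this
    · intro hb
      have hM0 : M = 0 := by rw [hMdef, hb]; simp
      have hz : ∀ x : Fin n → ℂ, M *ᵥ x = 0 := by
        intro x; rw [hM0]; exact Matrix.zero_mulVec x
      have hall : ∀ j, lam j = 0 := by
        intro j
        have hv := hM.mulVec_eigenvectorBasis j
        have hv0 : ⇑(hM.eigenvectorBasis j) ≠ 0 := by simpa using hM.eigenvectorBasis.orthonormal.ne_zero j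
        have hzz := (hv.symm).trans (hz _)
        exact (smul_eq_zero.mp hzz).resolve_right (by simpa using hv0)
      rw [hmain]
      have : ∏ j, Real.sqrt (1 - lam j ^ 2) = 1 := by
        apply Finset.prod_eq_one
        intro j _
        rw [hall j]
        simp
      rw [this, mul_one]
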